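/- Consider the population of three individuals with healthy-probabilities q1=q2=1/2, q3=1 and utilities u1=u2=u3=1, with testing budget B=2 and no pool size constraint. The overlapping testing regime T*=({1,3},{2,3}) achieves expected welfare 7/4, while every non-overlapping testing regime with two tests achieves expected welfare at most 3/2. Hence the gain of overlaps for B=2 is at least 7/6. -/

import Mathlib

open Finset

/-- Probability of a health realization `ω` (true = healthy) under independent
healthy-probabilities `q`. -/
noncomputable def healthProb {n : ℕ} (q : Fin n → ℝ) (ω : Fin n → Bool) : ℝ :=
  ∏ i, if ω i then q i else 1 - q i

/-- Probability that individual `i` lies in at least one negative test of the regime `T`. -/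
noncomputable def inNegProb {n B : ℕ} (q : Fin n → ℝ) (T : Fin B → Finset (Fin n))
    (i : Fin n) : ℝ :=
  ∑ ω : Fin n → Bool,
    if ∃ j, i ∈ T j ∧ ∀ k ∈ T j, ω k = true then healthProb q ω else 0

/-- Expected welfare of a (possibly overlapping) testing regime `T`. -/
noncomputable def welfare {n B : ℕ} (q u : Fin n → ℝ) (T : Fin B → Finset (Fin n)) : ℝ :=
  ∑ i, u i * inNegProb q T i

/-- Stand-alone expected welfare of a single pooled test `t`. -/
noncomputable def testWelfare {n : ℕ} (q u : Fin n → ℝ) (t : Finset (Fin n)) : ℝ :=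
  (∏ i ∈ t, q i) * ∑ i ∈ t, u i

/-- Welfare of a non-overlapping testing regime, as a sum of stand-alone test welfares. -/
noncomputable def noWelfare {n B : ℕ} (q u : Fin n → ℝ) (T : Fin B → Finset (Fin n)) : ℝ :=
  ∑ j, testWelfare q u (T j)

/-- Probability that test `T j` is pivotal for individual `i`: `i ∈ T j`, test `T j` is
negative, and every earlier test containing `i` is positive. -/
noncomputable def pivotalProb {n B : ℕ} (q : Fin n → ℝ) (T : Fin B → Finset (Fin n))
    (i : Fin n) (j : Fin B) : ℝ :=
  ∑ ω : Fin n → Bool,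
    if i ∈ T j ∧ (∀ k ∈ T j, ω k = true) ∧
        (∀ j' : Fin B, j' < j → i ∈ T j' → ∃ k ∈ T j', ω k = false)
      then healthProb q ω else 0


lemma sum_bool3 (f : (Fin 3 → Bool) → ℝ) :
    ∑ ω, f ω = f ![false,false,false] + f ![false,false,true] + f ![false,true,false]
      + f ![false,true,true] + f ![true,false,false] + f ![true,false,true]
      + f ![true,true,false] + f ![true,true,true] := by
  have h : (univ : Finset (Fin 3 → Bool)) =
      {![false,false,false], ![false,false,true], ![false,true,false], ![false,true,true],
       ![true,false,false], ![true,false,true], ![true,true,false], ![true,true,true]} := by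
    decide
  rw [h]
  simp (config := {decide := true}) [Finset.sum_insert, Finset.mem_insert]
  ring

set_option maxHeartbeats 2000000 in
/-- The three-person instance with healthy-probabilities `q₁ = q₂ = 1/2`, `q₃ = 1` and
unit utilities: the overlapping regime `({1,3}, {2,3})` achieves welfare `7/4`, every
non-overlapping two-test regime achieves welfare at most `3/2`, and hence every
non-overlapping regime is beaten by at least a factor `7/6`, so `gain(2) ≥ 7/6`. -/
theorem stmt0 :
    let q : Fin 3 → ℝ := ![1 / 2, 1 / 2, 1]
    let u : Fin 3 → ℝ := ![1, 1, 1]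
    let Tstar : Fin 2 → Finset (Fin 3) := ![{0, 2}, {1, 2}]
    welfare q u Tstar = 7 / 4 ∧
      (∀ T : Fin 2 → Finset (Fin 3),
        (∀ j k : Fin 2, j ≠ k → Disjoint (T j) (T k)) → welfare q u T ≤ 3 / 2) ∧
      (∀ T : Fin 2 → Finset (Fin 3),
        (∀ j k : Fin 2, j ≠ k → Disjoint (T j) (T k)) →
          (7 / 6 : ℝ) * welfare q u T ≤ welfare q u Tstar) := by
  intro q u Tstar
  have hcase : ∀ s : Finset (Fin 3), s = ∅ ∨ s = {0} ∨ s = {1} ∨ s = {2} ∨ s = {0, 1} ∨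
      s = {0, 2} ∨ s = {1, 2} ∨ s = {0, 1, 2} := by decide
  have key : ∀ s t : Finset (Fin 3), Disjoint s t → welfare q u ![s, t] ≤ 3 / 2 := by
    intro s t hd
    rcases hcase s with rfl | rfl | rfl | rfl | rfl | rfl | rfl | rfl <;>
      rcases hcase t with rfl | rfl | rfl | rfl | rfl | rfl | rfl | rfl <;>
      first
        | exact absurd hd (by decide)
        | (simp only [welfare, inNegProb, healthProb, Fin.sum_univ_three, sum_bool3,
             Fin.exists_fin_two, q, u]
           simp (config := {decide := true})
           norm_num [Fin.prod_univ_three, Matrix.cons_val_zero, Matrix.cons_val_one,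
             Matrix.head_cons, Matrix.cons_val_two, Matrix.tail_cons])
  have h1 : welfare q u Tstar = 7 / 4 := by
    simp only [welfare, inNegProb, healthProb, Fin.sum_univ_three, sum_bool3,
      Fin.exists_fin_two, q, u, Tstar]
    simp (config := {decide := true})
    norm_num [Fin.prod_univ_three, Matrix.cons_val_zero, Matrix.cons_val_one, Matrix.head_cons,
      Matrix.cons_val_two, Matrix.tail_cons]
  have h2 : ∀ T : Fin 2 → Finset (Fin 3),
      (∀ j k : Fin 2, j ≠ k → Disjoint (T j) (T k)) → welfare q u T ≤ 3 / 2 := by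
    intro T hdisj
    have hT : T = ![T 0, T 1] := by
      funext j; fin_cases j <;> rfl
    rw [hT]
    exact key _ _ (hdisj 0 1 (by decide))
  exact ⟨h1, h2, fun T hd => by have := h2 T hd; rw [h1]; linarith⟩
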